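/- Let A be the 2×2 integer matrix with rows (0, −7) and (1, −6), let D := {(i,0) : 0 ≤ i ≤ 6} ⊂ ℤ², and let T = T(A,D) be the unique nonempty compact subset of ℝ² with A·T = T + D. Then T is connected and the point z := Σ_{k=1}^{∞} A^{-k} (3,0) = (−3/2, −3/14) is a cut point of T, i.e., T \ {(−3/2, −3/14)} is disconnected. -/

import Mathlib

open Set Filter Topology Matrix

noncomputable section

/-- A set is the union of two nonempty separated sets. -/
def SepUnion {α : Type*} [TopologicalSpace α] (S : Set α) : Prop :=
  ∃ U V : Set α, S = U ∪ V ∧ U.Nonempty ∧ V.Nonempty ∧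
    closure U ∩ V = ∅ ∧ U ∩ closure V = ∅

/-- `X` is a cut set of `T`: `X ⊆ T` and `T \ X` is disconnected. -/
def IsCutSet {α : Type*} [TopologicalSpace α] (T X : Set α) : Prop :=
  X ⊆ T ∧ SepUnion (T \ X)

/-- `X` is an irreducible cut set of `T`. -/
def IsIrredCutSet {α : Type*} [TopologicalSpace α] (T X : Set α) : Prop :=
  IsCutSet T X ∧ ∀ X₀ : Set α, X₀ ⊂ X → closure X₀ ∩ T ⊆ X₀ → ¬ SepUnion (T \ X₀)

/-- The real matrix obtained from an integer matrix. -/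
def rmat {d : ℕ} (A : Matrix (Fin d) (Fin d) ℤ) : Matrix (Fin d) (Fin d) ℝ :=
  A.map Int.cast

/-- The real vector obtained from an integer vector. -/
def rvec {d : ℕ} (v : Fin d → ℤ) : Fin d → ℝ := fun i => (v i : ℝ)

/-- The translate `T + v` of `T` by a lattice vector `v`. -/
def trT {d : ℕ} (T : Set (Fin d → ℝ)) (v : Fin d → ℤ) : Set (Fin d → ℝ) :=
  (fun x => x + rvec v) '' T

/-- Every complex eigenvalue of `A` has modulus `> 1`. -/
def Expanding {d : ℕ} (A : Matrix (Fin d) (Fin d) ℤ) : Prop :=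
  ∀ μ : ℂ, Module.End.HasEigenvalue (Matrix.toLin' (A.map (Int.cast : ℤ → ℂ))) μ →
    1 < ‖μ‖

/-- `D` is a complete set of coset representatives of `ℤ^d / A ℤ^d`. -/
def ResidueSystem {d : ℕ} (A : Matrix (Fin d) (Fin d) ℤ) (D : Set (Fin d → ℤ)) : Prop :=
  ∀ x : Fin d → ℤ, ∃! e, e ∈ D ∧ ∃ y : Fin d → ℤ, x = A.mulVec y + e

/-- `T` is the attractor `T(A,D)`: nonempty, compact, with `A·T = T + D`. -/
def SelfAffine {d : ℕ} (A : Matrix (Fin d) (Fin d) ℤ) (D : Set (Fin d → ℤ))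
    (T : Set (Fin d → ℝ)) : Prop :=
  T.Nonempty ∧ IsCompact T ∧
    (rmat A).mulVec '' T = ⋃ e ∈ D, (fun x => x + rvec e) '' T

/-- `T = T(A,D)` is a `ℤ^d`-tile: a self-affine attractor for an expanding integer
matrix and a standard digit set, with nonempty interior, tiling `ℝ^d` by `ℤ^d`. -/
def IsZdTile {d : ℕ} (A : Matrix (Fin d) (Fin d) ℤ) (D : Set (Fin d → ℤ))
    (T : Set (Fin d → ℝ)) : Prop :=
  Expanding A ∧ ResidueSystem A D ∧ SelfAffine A D T ∧ (interior T).Nonempty ∧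
    (⋃ v : Fin d → ℤ, trT T v) = univ ∧
    Pairwise fun v₁ v₂ : Fin d → ℤ => interior (trT T v₁) ∩ trT T v₂ = ∅

/-- `V_n = D + A·D + ⋯ + A^{n-1}·D`, the vertex set of the `n`-th Hata graph. -/
def Vset {d : ℕ} (A : Matrix (Fin d) (Fin d) ℤ) (D : Set (Fin d → ℤ)) (n : ℕ) :
    Set (Fin d → ℤ) :=
  {v | ∃ dig : Fin n → (Fin d → ℤ), (∀ k, dig k ∈ D) ∧
    v = ∑ k : Fin n, (A ^ (k : ℕ)).mulVec (dig k)}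

/-- The set of children `C(U) = A·U + D`. -/
def childSet {d : ℕ} (A : Matrix (Fin d) (Fin d) ℤ) (D : Set (Fin d → ℤ))
    (U : Set (Fin d → ℤ)) : Set (Fin d → ℤ) :=
  {w | ∃ u ∈ U, ∃ e ∈ D, w = A.mulVec u + e}

/-- `X_n(W) = ⋃_{v ∈ W} A^{-n}(T + v)`. -/
def XnSet {d : ℕ} (A : Matrix (Fin d) (Fin d) ℤ) (T : Set (Fin d → ℝ)) (n : ℕ)
    (W : Set (Fin d → ℤ)) : Set (Fin d → ℝ) :=
  ⋃ v ∈ W, ((rmat A)⁻¹ ^ n).mulVec '' trT T v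

/-- The subgraph of the `n`-th Hata graph induced on `W` is connected:
any two vertices of `W` are joined by a path inside `W`, consecutive tiles meeting. -/
def HataConn {d : ℕ} (T : Set (Fin d → ℝ)) (W : Set (Fin d → ℤ)) : Prop :=
  ∀ v ∈ W, ∀ w ∈ W,
    Relation.ReflTransGen (fun a b => a ∈ W ∧ b ∈ W ∧ (trT T a ∩ trT T b).Nonempty) v w

/-- The matrix of Example 4.3 (CNS tile, `A = 6`, `B = 7`). -/
def A67 : Matrix (Fin 2) (Fin 2) ℤ := !![0, -7; 1, -6]

/-- The digit set of Example 4.3. -/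
def D67 : Set (Fin 2 → ℤ) := {v | ∃ i : ℤ, 0 ≤ i ∧ i ≤ 6 ∧ v = ![i, 0]}


/-- the explicit inverse -/
def Nmat : Matrix (Fin 2) (Fin 2) ℝ := !![-6/7, 1; -1/7, 0]

lemma rmatA : rmat A67 = !![(0:ℝ), -7; 1, -6] := by
  ext i j
  fin_cases i <;> fin_cases j <;> simp [rmat, A67, Matrix.map_apply] <;> norm_num

lemma NA_eq_one : Nmat * rmat A67 = 1 := by
  rw [rmatA]
  ext i j
  fin_cases i <;> fin_cases j <;>
    simp [Nmat, Matrix.mul_apply, Fin.sum_univ_two, Matrix.one_apply] <;> norm_num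

lemma AN_eq_one : rmat A67 * Nmat = 1 := by
  rw [rmatA]
  ext i j
  fin_cases i <;> fin_cases j <;>
    simp [Nmat, Matrix.mul_apply, Fin.sum_univ_two, Matrix.one_apply] <;> norm_num

lemma Minv_eq : (rmat A67)⁻¹ = Nmat := Matrix.inv_eq_left_inv NA_eq_one

lemma Nmat_mulVec (x : Fin 2 → ℝ) :
    Nmat.mulVec x = ![(-6/7) * x 0 + x 1, (-1/7) * x 0] := by
  funext i
  fin_cases i <;>
    simp [Nmat, Matrix.mulVec, dotProduct, Fin.sum_univ_two, Matrix.vecHead, Matrix.vecTail] <;> ring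

lemma A_mulVec (x : Fin 2 → ℝ) :
    (rmat A67).mulVec x = ![-7 * x 1, x 0 - 6 * x 1] := by
  rw [rmatA]; funext i
  fin_cases i <;>
    simp [Matrix.mulVec, dotProduct, Fin.sum_univ_two, Matrix.vecHead, Matrix.vecTail] <;> ring

lemma NA_vec (x : Fin 2 → ℝ) : Nmat.mulVec ((rmat A67).mulVec x) = x := by
  rw [Matrix.mulVec_mulVec, NA_eq_one, Matrix.one_mulVec]


/-! ### Eigen-functionals -/

def s2 : ℝ := Real.sqrt 2
lemma s2_sq : s2 * s2 = 2 := Real.mul_self_sqrt (by norm_num)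
lemma s2_nonneg : 0 ≤ s2 := Real.sqrt_nonneg 2
lemma s2_lb : 1.414 < s2 := by
  have h := s2_sq
  nlinarith [s2_nonneg, sq_nonneg (s2 - 1.414)]
lemma s2_ub : s2 < 1.415 := by
  have h := s2_sq
  nlinarith [s2_nonneg, sq_nonneg (s2 - 1.415)]

def be1 : ℝ := -3 + s2
def be2 : ℝ := -3 - s2

lemma be1_quad : be1 * be1 + 6 * be1 + 7 = 0 := by
  have := s2_sq; unfold be1; nlinarith
lemma be2_quad : be2 * be2 + 6 * be2 + 7 = 0 := by
  have := s2_sq; unfold be2; nlinarith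
lemma be1_neg : be1 < 0 := by have := s2_ub; unfold be1; linarith
lemma be2_neg : be2 < 0 := by have := s2_lb; unfold be2; linarith
lemma be1_lt_neg_one : be1 < -1 := by have := s2_ub; unfold be1; linarith
lemma be2_lt_neg_one : be2 < -1 := by have := s2_lb; unfold be2; linarith

/-- the eigen-functional -/
def ph (b : ℝ) (x : Fin 2 → ℝ) : ℝ := x 0 + b * x 1

lemma ph_add (b : ℝ) (x y : Fin 2 → ℝ) : ph b (x + y) = ph b x + ph b y := by
  simp [ph]; ring
lemma ph_sub (b : ℝ) (x y : Fin 2 → ℝ) : ph b (x - y) = ph b x - ph b y := by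
  simp [ph]; ring

lemma ph_N (b : ℝ) (hb : b * b + 6 * b + 7 = 0) (x : Fin 2 → ℝ) :
    ph b (Nmat.mulVec x) = ph b x / b := by
  have hb0 : b ≠ 0 := by intro h; rw [h] at hb; norm_num at hb
  rw [Nmat_mulVec]
  simp only [ph, Matrix.cons_val_zero, Matrix.cons_val_one, Matrix.head_cons]
  rw [eq_div_iff hb0]
  linear_combination (-(x 0)/7) * hb

lemma ph_inj (x y : Fin 2 → ℝ) (h1 : ph be1 x = ph be1 y) (h2 : ph be2 x = ph be2 y) :
    x = y := by
  have hs : (0:ℝ) < s2 := by have := s2_lb; linarith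
  have hd : be1 - be2 = 2 * s2 := by unfold be1 be2; ring
  have e1 : x 1 = y 1 := by
    have := h1; have := h2
    unfold ph at h1 h2
    nlinarith [hs]
  have e0 : x 0 = y 0 := by
    unfold ph at h1; rw [e1] at h1; linarith
  funext i
  fin_cases i
  · exact e0
  · exact e1

/-! ### the candidate cut point -/

def zpt : Fin 2 → ℝ := ![-(3 : ℝ) / 2, -(3 : ℝ) / 14]
def c1 : ℝ := ph be1 zpt
def c2 : ℝ := ph be2 zpt

lemma c1_eq : c1 = (-12 - 3 * s2) / 14 := by
  unfold c1 ph zpt be1; norm_num; ring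
lemma c2_eq : c2 = (-12 + 3 * s2) / 14 := by
  unfold c2 ph zpt be2; norm_num; ring

lemma c1_fix : be1 * c1 = c1 + 3 := by
  rw [c1_eq]; unfold be1; have := s2_sq; nlinarith
lemma c2_fix : be2 * c2 = c2 + 3 := by
  rw [c2_eq]; unfold be2; have := s2_sq; nlinarith

lemma rvec_j (j : ℤ) : rvec ![j, 0] = ![(j : ℝ), 0] := by
  funext i; fin_cases i <;> simp [rvec]

lemma ph_jvec (b : ℝ) (j : ℝ) : ph b ![j, 0] = j := by simp [ph]

/-- `g x = N(x + j e₁)` in φ-coordinates. -/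
lemma ph_step (b : ℝ) (hb : b * b + 6 * b + 7 = 0) (x : Fin 2 → ℝ) (j : ℝ) :
    ph b (Nmat.mulVec (x + ![j, 0])) = (ph b x + j) / b := by
  rw [ph_N b hb, ph_add, ph_jvec]

lemma zpt_fixed : Nmat.mulVec (zpt + ![(3:ℝ), 0]) = zpt := by
  have h : zpt + ![(3:ℝ), 0] = ![(3:ℝ)/2, -(3:ℝ)/14] := by
    funext i; fin_cases i <;> simp [zpt] <;> norm_num
  rw [h, Nmat_mulVec]
  funext i; fin_cases i <;> simp [zpt] <;> norm_num

/-! ### step lemmas from the set equation -/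

section Steps
variable {T : Set (Fin 2 → ℝ)}

lemma forward_step (hself : SelfAffine A67 D67 T) (x : Fin 2 → ℝ) (hx : x ∈ T) :
    ∃ t ∈ T, ∃ j : ℤ, 0 ≤ j ∧ j ≤ 6 ∧ x = Nmat.mulVec (t + ![(j:ℝ), 0]) := by
  obtain ⟨-, -, heq⟩ := hself
  have hmem : (rmat A67).mulVec x ∈ (rmat A67).mulVec '' T := ⟨x, hx, rfl⟩
  rw [heq] at hmem
  simp only [mem_iUnion, mem_image] at hmem
  obtain ⟨e, ⟨j, hj0, hj6, rfl⟩, t, ht, hte⟩ := hmem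
  refine ⟨t, ht, j, hj0, hj6, ?_⟩
  have := congrArg (Nmat.mulVec) hte
  rw [NA_vec] at this
  rw [← this, rvec_j]
lemma backward_step (hself : SelfAffine A67 D67 T) (t : Fin 2 → ℝ) (ht : t ∈ T) (j : ℤ) (hj0 : 0 ≤ j) (hj6 : j ≤ 6) :
    Nmat.mulVec (t + ![(j:ℝ), 0]) ∈ T := by
  obtain ⟨-, -, heq⟩ := hself
  have hmem : t + rvec ![j,0] ∈ ⋃ e ∈ D67, (fun x => x + rvec e) '' T := by
    simp only [mem_iUnion, mem_image]
    exact ⟨![j,0], ⟨j, hj0, hj6, rfl⟩, t, ht, rfl⟩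
  rw [← heq] at hmem
  obtain ⟨s, hs, hse⟩ := hmem
  have := congrArg (Nmat.mulVec) hse
  rw [NA_vec] at this
  rw [rvec_j] at this
  rw [← this]; exact hs
end Steps

lemma ph_continuous (b : ℝ) : Continuous (ph b) := by
  unfold ph
  exact (continuous_apply 0).add (continuous_const.mul (continuous_apply 1))

section Bounds
variable {T : Set (Fin 2 → ℝ)}

lemma sup_bound (hself : SelfAffine A67 D67 T) (b c q : ℝ)
    (hb : b * b + 6 * b + 7 = 0) (hq : |b| = q) (hq1 : 1 < q) (hc : b * c = c + 3) :
    ∀ x ∈ T, |ph b x - c| ≤ 3 / (q - 1) := by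
  obtain ⟨hne, hcomp, -⟩ := id hself
  have hcont : Continuous (fun x => |ph b x - c|) :=
    ((ph_continuous b).sub continuous_const).abs
  have hbdd : BddAbove ((fun x => |ph b x - c|) '' T) := (hcomp.image hcont).bddAbove
  set s := sSup ((fun x => |ph b x - c|) '' T) with hs
  have hb0 : b ≠ 0 := by intro h; rw [h] at hb; norm_num at hb
  have hle : ∀ x ∈ T, |ph b x - c| ≤ s := fun x hx => le_csSup hbdd ⟨x, hx, rfl⟩
  have hstep : ∀ x ∈ T, |ph b x - c| ≤ (s + 3) / q := by
    intro x hx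
    obtain ⟨t, ht, j, hj0, hj6, rfl⟩ := forward_step hself x hx
    have key : ph b (Nmat.mulVec (t + ![(j:ℝ), 0])) - c
        = (ph b t - c + ((j:ℝ) - 3)) / b := by
      rw [ph_step b hb t j]; field_simp; linear_combination -hc
    rw [key, abs_div, hq]
    have hj3 : |(j:ℝ) - 3| ≤ 3 := by
      have h0 : (0:ℝ) ≤ (j:ℝ) := by exact_mod_cast hj0
      have h6 : (j:ℝ) ≤ 6 := by exact_mod_cast hj6
      rw [abs_le]; constructor <;> linarith
    have h1 : |ph b t - c + ((j:ℝ) - 3)| ≤ s + 3 :=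
      (abs_add_le _ _).trans (by linarith [hle t ht])
    exact div_le_div_of_nonneg_right h1 (by linarith) |>.trans (le_refl _)
  have hssup : s ≤ (s + 3) / q := by
    apply csSup_le (hne.image _)
    rintro r ⟨x, hx, rfl⟩
    exact hstep x hx
  have hs0 : 0 ≤ s := le_trans (abs_nonneg _) (hle _ hne.some_mem)
  intro x hx
  have : s ≤ 3 / (q - 1) := by
    rw [le_div_iff₀ (by linarith : (0:ℝ) < q)] at hssup
    rw [le_div_iff₀ (by linarith : (0:ℝ) < q - 1)]
    nlinarith
  exact (hle x hx).trans this
end Bounds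

lemma abs_be1 : |be1| = 3 - s2 := by
  rw [abs_of_neg be1_neg]; unfold be1; ring
lemma abs_be2 : |be2| = 3 + s2 := by
  rw [abs_of_neg be2_neg]; unfold be2; ring
lemma q1_gt : (1:ℝ) < 3 - s2 := by have := s2_ub; linarith
lemma q2_gt : (1:ℝ) < 3 + s2 := by have := s2_lb; linarith

section Bounds2
variable {T : Set (Fin 2 → ℝ)}

lemma T_bound1 (hself : SelfAffine A67 D67 T) :
    ∀ x ∈ T, |ph be1 x - c1| ≤ 3 / (2 - s2) := by
  have h := sup_bound hself be1 c1 (3 - s2) be1_quad abs_be1 q1_gt c1_fix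
  intro x hx
  have := h x hx
  have he : (3:ℝ) - s2 - 1 = 2 - s2 := by ring
  rwa [he] at this

lemma T_bound2 (hself : SelfAffine A67 D67 T) :
    ∀ x ∈ T, |ph be2 x - c2| ≤ 3 / (2 + s2) := by
  have h := sup_bound hself be2 c2 (3 + s2) be2_quad abs_be2 q2_gt c2_fix
  intro x hx
  have := h x hx
  have he : (3:ℝ) + s2 - 1 = 2 + s2 := by ring
  rwa [he] at this

/-- digit forcing on the fiber -/
lemma fiber_step (hself : SelfAffine A67 D67 T) (x : Fin 2 → ℝ) (hx : x ∈ T)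
    (hph : ph be2 x = c2) :
    ∃ t ∈ T, ph be2 t = c2 ∧ x = Nmat.mulVec (t + ![(3:ℝ), 0]) := by
  obtain ⟨t, ht, j, hj0, hj6, rfl⟩ := forward_step hself x hx
  have hphx : ph be2 (Nmat.mulVec (t + ![(j:ℝ), 0])) = (ph be2 t + j) / be2 :=
    ph_step be2 be2_quad t j
  have hb0 : be2 ≠ 0 := ne_of_lt be2_neg
  have ht2 : ph be2 t = c2 + (3 - (j:ℝ)) := by
    rw [hphx] at hph
    field_simp at hph
    linear_combination hph + c2_fix
  have habs : |(3:ℝ) - (j:ℝ)| ≤ 3 / (2 + s2) := by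
    have := T_bound2 hself t ht
    rw [ht2] at this
    simpa using this
  have hj3 : j = 3 := by
    have hlt : |(3:ℝ) - (j:ℝ)| < 1 := by
      have : (3:ℝ) / (2 + s2) < 1 := by
        rw [div_lt_one (by have := s2_lb; linarith)]
        have := s2_lb; linarith
      linarith
    have h1 : ((3:ℝ) - j) < 1 := lt_of_abs_lt hlt
    have h2 : -(1:ℝ) < 3 - j := neg_lt_of_abs_lt hlt
    have : (2:ℝ) < (j:ℝ) := by linarith
    have : ((j:ℝ)) < 4 := by linarith
    have hj2 : (2:ℤ) < j := by exact_mod_cast ‹(2:ℝ) < (j:ℝ)›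
    have hj4 : j < 4 := by exact_mod_cast ‹((j:ℝ)) < 4›
    omega
  subst hj3
  exact ⟨t, ht, by rw [ht2]; norm_num, by norm_num⟩

lemma fiber_unique (hself : SelfAffine A67 D67 T) (x0 : Fin 2 → ℝ) (hx0 : x0 ∈ T)
    (hph : ph be2 x0 = c2) : x0 = zpt := by
  set E : Set (Fin 2 → ℝ) := {x | x ∈ T ∧ ph be2 x = c2} with hE
  have hx0E : x0 ∈ E := ⟨hx0, hph⟩
  have hbdd : BddAbove ((fun x => |ph be1 x - c1|) '' E) := by
    refine ⟨3 / (2 - s2), ?_⟩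
    rintro r ⟨x, hx, rfl⟩
    exact T_bound1 hself x hx.1
  set s := sSup ((fun x => |ph be1 x - c1|) '' E) with hs
  have hle : ∀ x ∈ E, |ph be1 x - c1| ≤ s := fun x hx => le_csSup hbdd ⟨x, hx, rfl⟩
  have hq1 : (0:ℝ) < 3 - s2 := by have := s2_ub; linarith
  have hstep : ∀ x ∈ E, |ph be1 x - c1| ≤ s / (3 - s2) := by
    rintro x ⟨hxT, hx2⟩
    obtain ⟨t, ht, ht2, rfl⟩ := fiber_step hself x hxT hx2
    have key : ph be1 (Nmat.mulVec (t + ![(3:ℝ), 0])) - c1 = (ph be1 t - c1) / be1 := by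
      rw [ph_step be1 be1_quad t 3]
      have hb0 : be1 ≠ 0 := ne_of_lt be1_neg
      field_simp
      linear_combination -c1_fix
    rw [key, abs_div, abs_be1]
    exact div_le_div_of_nonneg_right (hle t ⟨ht, ht2⟩) hq1.le
  have hssup : s ≤ s / (3 - s2) := by
    apply csSup_le (Set.Nonempty.image _ ⟨x0, hx0E⟩)
    rintro r ⟨x, hx, rfl⟩
    exact hstep x hx
  have hs0 : 0 ≤ s := le_trans (abs_nonneg _) (hle x0 hx0E)
  have hs_eq : s ≤ 0 := by
    rw [le_div_iff₀ hq1] at hssup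
    nlinarith [q1_gt]
  have h1 : ph be1 x0 = c1 := by
    have := hle x0 hx0E
    have : |ph be1 x0 - c1| ≤ 0 := this.trans hs_eq
    have := abs_nonneg (ph be1 x0 - c1)
    have h0 : |ph be1 x0 - c1| = 0 := le_antisymm ‹_› ‹_›
    have := abs_eq_zero.mp h0
    linarith
  exact ph_inj x0 zpt h1 (by rw [hph]; rfl)
end Bounds2

lemma vanish (a B q : ℝ) (hq : 1 < q) (h : ∀ n : ℕ, |a| ≤ B / q ^ n) : a = 0 := by
  by_contra ha
  have h0 : 0 < |a| := abs_pos.mpr ha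
  obtain ⟨n, hn⟩ := pow_unbounded_of_one_lt (B / |a|) hq
  have hqn : (0:ℝ) < q ^ n := pow_pos (by linarith) n
  have h1 := h n
  rw [le_div_iff₀ hqn] at h1
  rw [div_lt_iff₀ h0] at hn
  nlinarith

lemma cont_Nvec : Continuous (fun x : Fin 2 → ℝ => Nmat.mulVec x) := by
  have h := LinearMap.continuous_of_finiteDimensional (Matrix.mulVecLin Nmat)
  exact h

def gmap : (Fin 2 → ℝ) → (Fin 2 → ℝ) := fun x => Nmat.mulVec (x + ![(3:ℝ), 0])

lemma cont_gmap : Continuous gmap :=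
  cont_Nvec.comp (continuous_id.add continuous_const)

lemma ph_gmap (b c : ℝ) (hb : b * b + 6 * b + 7 = 0) (hc : b * c = c + 3)
    (x : Fin 2 → ℝ) : ph b (gmap x) - c = (ph b x - c) / b := by
  have hb0 : b ≠ 0 := by intro h; rw [h] at hb; norm_num at hb
  unfold gmap
  rw [ph_step b hb x 3]
  field_simp
  linear_combination -hc

section ZMem
variable {T : Set (Fin 2 → ℝ)}

lemma gmap_mem (hself : SelfAffine A67 D67 T) {t : Fin 2 → ℝ} (ht : t ∈ T) :
    gmap t ∈ T := by
  have h := backward_step hself t ht 3 (by norm_num) (by norm_num)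
  have hc3 : ((3:ℤ):ℝ) = (3:ℝ) := by norm_num
  rw [hc3] at h
  exact h

lemma zpt_mem (hself : SelfAffine A67 D67 T) : zpt ∈ T := by
  obtain ⟨hne, hcomp, -⟩ := id hself
  set K : ℕ → Set (Fin 2 → ℝ) := fun n => gmap^[n] '' T with hK
  have hKsub : ∀ n, K (n + 1) ⊆ K n := by
    intro n
    have : K (n + 1) = gmap^[n] '' (gmap '' T) := by
      rw [hK]; simp only [Function.iterate_succ, Set.image_comp]
    rw [this]
    apply Set.image_mono
    rintro y ⟨t, ht, rfl⟩
    exact gmap_mem hself ht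
  have hcontn : ∀ n, Continuous (gmap^[n]) := fun n => cont_gmap.iterate n
  have hKcomp : ∀ n, IsCompact (K n) := fun n => hcomp.image (hcontn n)
  have hKne : ∀ n, (K n).Nonempty := fun n => hne.image _
  have hint : (⋂ n, K n).Nonempty :=
    IsCompact.nonempty_iInter_of_sequence_nonempty_isCompact_isClosed K hKsub hKne
      (hKcomp 0) (fun n => (hKcomp n).isClosed)
  obtain ⟨y, hy⟩ := hint
  have hb1 : ∀ n, ∀ x ∈ K n, |ph be1 x - c1| ≤ (3 / (2 - s2)) / (3 - s2) ^ n := by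
    intro n
    induction n with
    | zero =>
      intro x hx
      have hx' : x ∈ T := by simpa [hK] using hx
      simpa using T_bound1 hself x hx'
    | succ n ih =>
      intro x hx
      have hx' : x ∈ gmap '' (gmap^[n] '' T) := by
        have he : gmap^[n+1] '' T = gmap '' (gmap^[n] '' T) := by
          rw [Function.iterate_succ']; exact Set.image_comp _ _ _
        rw [hK] at hx; exact he ▸ hx
      rw [hK] at ih
      obtain ⟨t, ht, rfl⟩ := hx'
      rw [ph_gmap be1 c1 be1_quad c1_fix t, abs_div, abs_be1, pow_succ]
      rw [← div_div]
      exact div_le_div_of_nonneg_right (ih t ht) (by have := s2_ub; linarith : (0:ℝ) ≤ 3 - s2)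
  have hb2 : ∀ n, ∀ x ∈ K n, |ph be2 x - c2| ≤ (3 / (2 + s2)) / (3 + s2) ^ n := by
    intro n
    induction n with
    | zero =>
      intro x hx
      have hx' : x ∈ T := by simpa [hK] using hx
      simpa using T_bound2 hself x hx'
    | succ n ih =>
      intro x hx
      have hx' : x ∈ gmap '' (gmap^[n] '' T) := by
        have he : gmap^[n+1] '' T = gmap '' (gmap^[n] '' T) := by
          rw [Function.iterate_succ']; exact Set.image_comp _ _ _
        rw [hK] at hx; exact he ▸ hx
      rw [hK] at ih
      obtain ⟨t, ht, rfl⟩ := hx'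
      rw [ph_gmap be2 c2 be2_quad c2_fix t, abs_div, abs_be2, pow_succ]
      rw [← div_div]
      exact div_le_div_of_nonneg_right (ih t ht) (by have := s2_lb; linarith : (0:ℝ) ≤ 3 + s2)
  have h1 : ph be1 y = c1 := by
    have := vanish (ph be1 y - c1) (3 / (2 - s2)) (3 - s2) q1_gt
      (fun n => hb1 n y (Set.mem_iInter.mp hy n))
    linarith
  have h2 : ph be2 y = c2 := by
    have := vanish (ph be2 y - c2) (3 / (2 + s2)) (3 + s2) q2_gt
      (fun n => hb2 n y (Set.mem_iInter.mp hy n))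
    linarith
  have hyz : y = zpt := ph_inj y zpt h1 h2
  have h0 : y ∈ K 0 := Set.mem_iInter.mp hy 0
  have hyT : y ∈ T := by simpa [hK] using h0
  rwa [hyz] at hyT
end ZMem

section Sep
variable {T : Set (Fin 2 → ℝ)}

lemma c2_neg : c2 < 0 := by
  rw [c2_eq]; have := s2_ub; nlinarith

lemma sep_union (hself : SelfAffine A67 D67 T) : ∃ U V : Set (Fin 2 → ℝ),
    T \ {zpt} = U ∪ V ∧ U.Nonempty ∧ V.Nonempty ∧
    closure U ∩ V = ∅ ∧ U ∩ closure V = ∅ := by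
  refine ⟨T ∩ ph be2 ⁻¹' (Iio c2), T ∩ ph be2 ⁻¹' (Ioi c2), ?_, ?_, ?_, ?_, ?_⟩
  · ext x
    simp only [mem_diff, mem_singleton_iff, mem_union, mem_inter_iff, mem_preimage,
      mem_Iio, mem_Ioi]
    constructor
    · rintro ⟨hxT, hxne⟩
      rcases lt_trichotomy (ph be2 x) c2 with h | h | h
      · exact Or.inl ⟨hxT, h⟩
      · exact absurd (fiber_unique hself x hxT h) hxne
      · exact Or.inr ⟨hxT, h⟩
    · rintro (⟨hxT, h⟩ | ⟨hxT, h⟩) <;> refine ⟨hxT, fun he => ?_⟩ <;>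
        rw [he] at h <;> [exact absurd rfl (ne_of_lt h); exact absurd rfl (ne_of_gt h)]
  · -- U nonempty : digit 6
    refine ⟨Nmat.mulVec (zpt + ![(6:ℝ), 0]), ?_, ?_⟩
    · have h := backward_step hself zpt (zpt_mem hself) 6 (by norm_num) (by norm_num)
      have hc6 : ((6:ℤ):ℝ) = (6:ℝ) := by norm_num
      rwa [hc6] at h
    · simp only [mem_preimage, mem_Iio]
      rw [ph_step be2 be2_quad zpt 6]
      show (c2 + 6) / be2 < c2
      rw [div_lt_iff_of_neg be2_neg]
      linarith [c2_fix]
  · -- V nonempty : digit 0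
    refine ⟨Nmat.mulVec (zpt + ![(0:ℝ), 0]), ?_, ?_⟩
    · have h := backward_step hself zpt (zpt_mem hself) 0 (by norm_num) (by norm_num)
      have hc0 : ((0:ℤ):ℝ) = (0:ℝ) := by norm_num
      rwa [hc0] at h
    · simp only [mem_preimage, mem_Ioi]
      rw [ph_step be2 be2_quad zpt 0]
      show c2 < (c2 + 0) / be2
      rw [lt_div_iff_of_neg be2_neg]
      have h2 : be2 < -1 := be2_lt_neg_one
      nlinarith [c2_neg]
  · -- closure U ∩ V = ∅
    apply Set.eq_empty_iff_forall_notMem.mpr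
    rintro x ⟨hcl, hxT, hgt⟩
    have hsub : closure (T ∩ ph be2 ⁻¹' (Iio c2)) ⊆ ph be2 ⁻¹' (Iic c2) := by
      apply closure_minimal
      · rintro y ⟨-, hy2⟩
        simp only [mem_preimage, mem_Iio] at hy2
        simp only [mem_preimage, mem_Iic]
        exact le_of_lt hy2
      · exact (isClosed_Iic).preimage (ph_continuous be2)
    have := hsub hcl
    simp only [mem_preimage, mem_Iic] at this
    simp only [mem_preimage, mem_Ioi] at hgt
    linarith
  · apply Set.eq_empty_iff_forall_notMem.mpr
    rintro x ⟨⟨hxT, hlt⟩, hcl⟩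
    have hsub : closure (T ∩ ph be2 ⁻¹' (Ioi c2)) ⊆ ph be2 ⁻¹' (Ici c2) := by
      apply closure_minimal
      · rintro y ⟨-, hy2⟩
        simp only [mem_preimage, mem_Ioi] at hy2
        simp only [mem_preimage, mem_Ici]
        exact le_of_lt hy2
      · exact (isClosed_Ici).preimage (ph_continuous be2)
    have := hsub hcl
    simp only [mem_preimage, mem_Ici] at this
    simp only [mem_preimage, mem_Iio] at hlt
    linarith
end Sep

/-! ### the geometric series -/

lemma ph_pow (b : ℝ) (hb : b * b + 6 * b + 7 = 0) (n : ℕ) :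
    ∀ v : Fin 2 → ℝ, ph b ((Nmat ^ n).mulVec v) = ph b v / b ^ n := by
  induction n with
  | zero => intro v; simp [Matrix.one_mulVec]
  | succ n ih =>
    intro v
    have h : (Nmat ^ (n + 1)).mulVec v = (Nmat ^ n).mulVec (Nmat.mulVec v) := by
      rw [Matrix.mulVec_mulVec, ← pow_succ]
    rw [h, ih, ph_N b hb, div_div, ← pow_succ']

lemma coord_bound (v : Fin 2 → ℝ) :
    |v 0| ≤ 3 * (|ph be1 v| + |ph be2 v|) ∧ |v 1| ≤ |ph be1 v| + |ph be2 v| := by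
  have hs := s2_lb
  have h1 : 2 * s2 * v 1 = ph be1 v - ph be2 v := by
    unfold ph be1 be2; ring
  have hb : |2 * s2 * v 1| ≤ |ph be1 v| + |ph be2 v| := by
    rw [h1]; exact abs_sub _ _
  have h2 : |2 * s2 * v 1| = 2 * s2 * |v 1| := by
    rw [abs_mul, abs_of_pos (by linarith : (0:ℝ) < 2 * s2)]
  have hv1 : |v 1| ≤ |ph be1 v| + |ph be2 v| := by
    rw [h2] at hb
    nlinarith [abs_nonneg (v 1)]
  refine ⟨?_, hv1⟩
  have h0 : v 0 = ph be1 v - be1 * v 1 := by unfold ph; ring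
  have hbe : |be1| ≤ 2 := by
    rw [abs_be1]; have := s2_ub; linarith
  calc |v 0| = |ph be1 v - be1 * v 1| := by rw [h0]
    _ ≤ |ph be1 v| + |be1 * v 1| := abs_sub _ _
    _ = |ph be1 v| + |be1| * |v 1| := by rw [abs_mul]
    _ ≤ |ph be1 v| + 2 * |v 1| := by
        have := abs_nonneg (v 1)
        nlinarith [hbe]
    _ ≤ 3 * (|ph be1 v| + |ph be2 v|) := by
        have := abs_nonneg (ph be1 v); have := abs_nonneg (ph be2 v)
        linarith

lemma q1_pos : (0:ℝ) < 3 - s2 := by have := s2_ub; linarith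
lemma q2_pos : (0:ℝ) < 3 + s2 := by have := s2_lb; linarith
lemma q1_le_q2 : (3:ℝ) - s2 ≤ 3 + s2 := by have := s2_nonneg; linarith

/-- bound on both eigencoordinates of `N^n v`, with the slow rate `3 - s2`. -/
lemma phsum_pow_bound (n : ℕ) (v : Fin 2 → ℝ) :
    |ph be1 ((Nmat ^ n).mulVec v)| + |ph be2 ((Nmat ^ n).mulVec v)|
      ≤ (|ph be1 v| + |ph be2 v|) / (3 - s2) ^ n := by
  have hq1 : (0:ℝ) < (3 - s2) ^ n := pow_pos q1_pos n
  have hq2 : (0:ℝ) < (3 + s2) ^ n := pow_pos q2_pos n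
  have e1 : |ph be1 ((Nmat ^ n).mulVec v)| = |ph be1 v| / (3 - s2) ^ n := by
    rw [ph_pow be1 be1_quad n v, abs_div, abs_pow, abs_be1]
  have e2 : |ph be2 ((Nmat ^ n).mulVec v)| = |ph be2 v| / (3 + s2) ^ n := by
    rw [ph_pow be2 be2_quad n v, abs_div, abs_pow, abs_be2]
  rw [e1, e2]
  have hle : |ph be2 v| / (3 + s2) ^ n ≤ |ph be2 v| / (3 - s2) ^ n := by
    apply div_le_div_of_nonneg_left (abs_nonneg _) hq1
    exact pow_le_pow_left₀ q1_pos.le q1_le_q2 n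
  rw [add_div]
  linarith

lemma pow_vec_tendsto (v : Fin 2 → ℝ) :
    Tendsto (fun n => (Nmat ^ n).mulVec v) atTop (𝓝 0) := by
  rw [tendsto_pi_nhds]
  intro i
  simp only [Pi.zero_apply]
  have hr : |(3 - s2)⁻¹| < 1 := by
    rw [abs_of_pos (inv_pos.mpr q1_pos), inv_lt_one_iff₀]
    right; exact q1_gt
  have hg : Tendsto (fun n : ℕ => 3 * (|ph be1 v| + |ph be2 v|) * ((3 - s2)⁻¹) ^ n)
      atTop (𝓝 0) := by
    have := tendsto_pow_atTop_nhds_zero_of_abs_lt_one hr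
    simpa using this.const_mul (3 * (|ph be1 v| + |ph be2 v|))
  apply squeeze_zero_norm _ hg
  intro n
  have hcb := coord_bound ((Nmat ^ n).mulVec v)
  have hps := phsum_pow_bound n v
  have hi : |((Nmat ^ n).mulVec v) i| ≤ 3 * (|ph be1 ((Nmat ^ n).mulVec v)| + |ph be2 ((Nmat ^ n).mulVec v)|) := by
    have hnn : 0 ≤ |ph be1 ((Nmat ^ n).mulVec v)| + |ph be2 ((Nmat ^ n).mulVec v)| := by
      positivity
    fin_cases i
    · exact hcb.1
    · exact le_trans hcb.2 (by linarith)
  rw [Real.norm_eq_abs]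
  calc |((Nmat ^ n).mulVec v) i|
      ≤ 3 * (|ph be1 ((Nmat ^ n).mulVec v)| + |ph be2 ((Nmat ^ n).mulVec v)|) := hi
    _ ≤ 3 * ((|ph be1 v| + |ph be2 v|) / (3 - s2) ^ n) := by linarith
    _ = 3 * (|ph be1 v| + |ph be2 v|) * ((3 - s2)⁻¹) ^ n := by
        rw [inv_pow]; ring

lemma partial_sum_eq (n : ℕ) :
    ∑ k ∈ Finset.range n, (Nmat ^ (k + 1)).mulVec ![(3:ℝ), 0]
      = zpt - (Nmat ^ n).mulVec zpt := by
  induction n with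
  | zero => simp [Matrix.one_mulVec]
  | succ n ih =>
    rw [Finset.sum_range_succ, ih]
    have hz : Nmat.mulVec zpt = zpt - Nmat.mulVec ![(3:ℝ), 0] := by
      have h := zpt_fixed
      rw [Matrix.mulVec_add] at h
      exact eq_sub_of_add_eq h
    have h1 : (Nmat ^ (n + 1)).mulVec zpt
        = (Nmat ^ n).mulVec zpt - (Nmat ^ (n + 1)).mulVec ![(3:ℝ), 0] := by
      have e : (Nmat ^ (n + 1)).mulVec zpt = (Nmat ^ n).mulVec (Nmat.mulVec zpt) := by
        rw [Matrix.mulVec_mulVec, ← pow_succ]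
      rw [e, hz, Matrix.mulVec_sub]
      congr 1
      rw [Matrix.mulVec_mulVec, ← pow_succ]
    rw [h1]; abel

lemma summable_f : Summable (fun k : ℕ => (Nmat ^ (k + 1)).mulVec ![(3:ℝ), 0]) := by
  have hr0 : (0:ℝ) ≤ (3 - s2)⁻¹ := (inv_pos.mpr q1_pos).le
  have hr1 : (3 - s2)⁻¹ < 1 := by
    rw [inv_lt_one_iff₀]; right; exact q1_gt
  apply Summable.of_norm_bounded
    ((summable_geometric_of_lt_one hr0 hr1).mul_left 18)
  intro k
  set w := (Nmat ^ (k + 1)).mulVec ![(3:ℝ), 0] with hw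
  have hps := phsum_pow_bound (k + 1) ![(3:ℝ), 0]
  have hphv : |ph be1 ![(3:ℝ), 0]| + |ph be2 ![(3:ℝ), 0]| = 6 := by
    simp [ph_jvec]; norm_num
  rw [hphv] at hps
  have hcb := coord_bound w
  have hnn : 0 ≤ |ph be1 w| + |ph be2 w| := by positivity
  have hkey : ∀ i : Fin 2, ‖w i‖ ≤ 18 * ((3 - s2)⁻¹) ^ k := by
    intro i
    rw [Real.norm_eq_abs]
    have hi : |w i| ≤ 3 * (|ph be1 w| + |ph be2 w|) := by
      fin_cases i
      · exact hcb.1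
      · exact le_trans hcb.2 (by linarith)
    have hq : (0:ℝ) < (3 - s2) ^ (k+1) := pow_pos q1_pos _
    have h6 : (6:ℝ) / (3 - s2) ^ (k + 1) ≤ 6 * ((3 - s2)⁻¹) ^ k := by
      have hle1 : (3 - s2)⁻¹ ≤ 1 := by
        rw [inv_le_one_iff₀]; right; exact q1_gt.le
      have hup : (6:ℝ) / (3 - s2) ^ (k + 1) = 6 * ((3 - s2)⁻¹) ^ k * (3 - s2)⁻¹ := by
        rw [pow_succ, div_eq_mul_inv, mul_inv, inv_pow]; ring
      rw [hup]
      nlinarith [pow_nonneg hr0 k, hle1, hr0]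
    calc |w i| ≤ 3 * (|ph be1 w| + |ph be2 w|) := hi
      _ ≤ 3 * (6 / (3 - s2) ^ (k + 1)) := by linarith
      _ ≤ 3 * (6 * ((3 - s2)⁻¹) ^ k) := by linarith
      _ = 18 * ((3 - s2)⁻¹) ^ k := by ring
  have hnn18 : (0:ℝ) ≤ 18 * ((3 - s2)⁻¹) ^ k :=
    mul_nonneg (by norm_num) (pow_nonneg hr0 k)
  exact (pi_norm_le_iff_of_nonneg hnn18).mpr hkey

lemma tsum_eq_zpt :
    (∑' k : ℕ, ((rmat A67)⁻¹ ^ (k + 1)).mulVec ![(3 : ℝ), 0]) = zpt := by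
  rw [Minv_eq]
  have hsum := summable_f
  have htend : Tendsto (fun n => ∑ k ∈ Finset.range n, (Nmat ^ (k + 1)).mulVec ![(3:ℝ), 0])
      atTop (𝓝 zpt) := by
    have he : (fun n => ∑ k ∈ Finset.range n, (Nmat ^ (k + 1)).mulVec ![(3:ℝ), 0])
        = fun n => zpt - (Nmat ^ n).mulVec zpt := by
      funext n; exact partial_sum_eq n
    rw [he]
    have := (pow_vec_tendsto zpt).const_sub zpt
    simpa using this
  exact ((hsum.hasSum_iff_tendsto_nat).mpr htend).tsum_eq

/-! ### connectedness of a decreasing intersection of compact connected sets -/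

lemma isConnected_iInter_of_seq {X : Type*} [TopologicalSpace X] [T2Space X]
    (K : ℕ → Set X) (hsub : ∀ n, K (n + 1) ⊆ K n)
    (hcomp : ∀ n, IsCompact (K n)) (hconn : ∀ n, IsConnected (K n)) :
    IsConnected (⋂ n, K n) := by
  have hKcl : ∀ n, IsClosed (K n) := fun n => (hcomp n).isClosed
  have hne : (⋂ n, K n).Nonempty :=
    IsCompact.nonempty_iInter_of_sequence_nonempty_isCompact_isClosed K hsub
      (fun n => (hconn n).nonempty) (hcomp 0) hKcl
  have hmono : ∀ m n, m ≤ n → K n ⊆ K m := by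
    intro m n hmn
    induction hmn with
    | refl => exact subset_rfl
    | step h ih => exact fun x hx => ih (hsub _ hx)
  refine ⟨hne, ?_⟩
  rw [isPreconnected_closed_iff]
  intro Z1 Z2 hZ1 hZ2 hcover h1 h2
  by_contra hem
  rw [Set.not_nonempty_iff_eq_empty] at hem
  set C := ⋂ n, K n with hC
  have hCcl : IsClosed C := isClosed_iInter hKcl
  have hCcomp : IsCompact C := (hcomp 0).of_isClosed_subset hCcl (iInter_subset _ 0)
  have hPcomp : IsCompact (C ∩ Z1) := hCcomp.inter_right hZ1
  have hQcomp : IsCompact (C ∩ Z2) := hCcomp.inter_right hZ2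
  have hdisj : Disjoint (C ∩ Z1) (C ∩ Z2) := by
    rw [Set.disjoint_iff_inter_eq_empty]
    rw [← hem]
    ext x; simp only [mem_inter_iff, mem_empty_iff_false]
    tauto
  obtain ⟨U, V, hUo, hVo, hPU, hQV, hUV⟩ :=
    SeparatedNhds.of_isCompact_isCompact hPcomp hQcomp hdisj
  have hCsub : C ⊆ U ∪ V := by
    intro x hx
    rcases hcover hx with h | h
    · exact Or.inl (hPU ⟨hx, h⟩)
    · exact Or.inr (hQV ⟨hx, h⟩)
  have hex : ∃ n, K n ⊆ U ∪ V := by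
    by_contra hno
    push_neg at hno
    set L : ℕ → Set X := fun n => K n \ (U ∪ V) with hL
    have hLne : ∀ n, (L n).Nonempty := by
      intro n
      obtain ⟨x, hx, hx'⟩ := Set.not_subset.mp (hno n)
      exact ⟨x, hx, hx'⟩
    have hLsub : ∀ n, L (n + 1) ⊆ L n := fun n =>
      Set.diff_subset_diff_left (hsub n)
    have hLcl : ∀ n, IsClosed (L n) := fun n =>
      (hKcl n).sdiff (hUo.union hVo)
    have hLcomp : IsCompact (L 0) := (hcomp 0).of_isClosed_subset (hLcl 0) diff_subset
    obtain ⟨y, hy⟩ :=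
      IsCompact.nonempty_iInter_of_sequence_nonempty_isCompact_isClosed L hLsub hLne
        hLcomp hLcl
    have hyC : y ∈ C := by
      rw [hC, Set.mem_iInter]
      intro n
      exact ((Set.mem_iInter.mp hy n).1)
    have : y ∉ U ∪ V := (Set.mem_iInter.mp hy 0).2
    exact this (hCsub hyC)
  obtain ⟨n, hn⟩ := hex
  obtain ⟨p, hp⟩ := h1
  obtain ⟨q, hq⟩ := h2
  have hpKn : p ∈ K n := by
    have := hp.1; rw [hC, Set.mem_iInter] at this; exact this n
  have hqKn : q ∈ K n := by
    have := hq.1; rw [hC, Set.mem_iInter] at this; exact this n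
  have hres := (hconn n).isPreconnected U V hUo hVo hn
    ⟨p, hpKn, hPU ⟨hp.1, hp.2⟩⟩ ⟨q, hqKn, hQV ⟨hq.1, hq.2⟩⟩
  obtain ⟨x, -, hxU, hxV⟩ := hres
  exact (Set.disjoint_iff.mp hUV) ⟨hxU, hxV⟩

/-! ### the IFS operator -/

def dmap (r : ℝ) (x : Fin 2 → ℝ) : Fin 2 → ℝ := Nmat.mulVec (x + ![r, 0])

def Fop (K : Set (Fin 2 → ℝ)) : Set (Fin 2 → ℝ) :=
  ⋃ j : Fin 7, dmap ((j : ℕ) : ℝ) '' K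

lemma cont_dmap (r : ℝ) : Continuous (dmap r) :=
  cont_Nvec.comp (continuous_id.add continuous_const)

lemma Fop_mono {K K' : Set (Fin 2 → ℝ)} (h : K ⊆ K') : Fop K ⊆ Fop K' := by
  apply Set.iUnion_mono
  intro j
  exact Set.image_mono h

lemma Fop_compact {K : Set (Fin 2 → ℝ)} (h : IsCompact K) : IsCompact (Fop K) :=
  isCompact_iUnion fun j => h.image (cont_dmap _)

lemma mem_Fop {K : Set (Fin 2 → ℝ)} {y : Fin 2 → ℝ} :
    y ∈ Fop K ↔ ∃ j : Fin 7, ∃ x ∈ K, y = dmap ((j : ℕ) : ℝ) x := by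
  simp only [Fop, Set.mem_iUnion, Set.mem_image]
  constructor
  · rintro ⟨j, x, hx, rfl⟩; exact ⟨j, x, hx, rfl⟩
  · rintro ⟨j, x, hx, rfl⟩; exact ⟨j, x, hx, rfl⟩

section FopT
variable {T : Set (Fin 2 → ℝ)}

lemma T_sub_FopT (hself : SelfAffine A67 D67 T) : T ⊆ Fop T := by
  intro x hx
  obtain ⟨t, ht, j, hj0, hj6, rfl⟩ := forward_step hself x hx
  rw [mem_Fop]
  have hlt : j.toNat < 7 := by omega
  refine ⟨⟨j.toNat, hlt⟩, t, ht, ?_⟩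
  have hcast : (((⟨j.toNat, hlt⟩ : Fin 7) : ℕ) : ℝ) = ((j : ℤ) : ℝ) := by
    show ((j.toNat : ℕ) : ℝ) = ((j : ℤ) : ℝ)
    rw [← Int.cast_natCast]
    exact congrArg _ (Int.toNat_of_nonneg hj0)
  unfold dmap
  rw [hcast]

lemma FopT_sub_T (hself : SelfAffine A67 D67 T) : Fop T ⊆ T := by
  intro y hy
  rw [mem_Fop] at hy
  obtain ⟨j, x, hx, rfl⟩ := hy
  have h := backward_step hself x hx ((j : ℕ) : ℤ) (by positivity) (by exact_mod_cast (by omega : (j:ℕ) ≤ 6))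
  unfold dmap
  push_cast at h
  exact h
end FopT

/-! ### the initial parallelogram -/

def Kset : Set (Fin 2 → ℝ) := {x | |ph be1 x| ≤ 11 ∧ |ph be2 x| ≤ 2}

def u1 : Fin 2 → ℝ := ![1, 0]
def u2 : Fin 2 → ℝ := ![6, 1]

/-- overlap predicate -/
def ov (K : Set (Fin 2 → ℝ)) (v : Fin 2 → ℝ) : Prop := ∃ y ∈ K, y - v ∈ K

lemma Kset_closed : IsClosed Kset := by
  have h1 : IsClosed {x : Fin 2 → ℝ | |ph be1 x| ≤ 11} :=
    isClosed_le (continuous_abs.comp (ph_continuous be1)) continuous_const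
  have h2 : IsClosed {x : Fin 2 → ℝ | |ph be2 x| ≤ 2} :=
    isClosed_le (continuous_abs.comp (ph_continuous be2)) continuous_const
  exact h1.inter h2

lemma Kset_compact : IsCompact Kset := by
  have hsub : Kset ⊆ Icc (fun _ => -39 : Fin 2 → ℝ) (fun _ => 39 : Fin 2 → ℝ) := by
    rintro x ⟨h1, h2⟩
    have hcb := coord_bound x
    have hb0 : |x 0| ≤ 39 := hcb.1.trans (by nlinarith)
    have hb1 : |x 1| ≤ 39 := hcb.2.trans (by nlinarith)
    constructor <;> intro i <;> fin_cases i <;>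
      simp only [] <;> first
        | (cases abs_le.mp hb0; assumption)
        | (cases abs_le.mp hb1; assumption)
  exact IsCompact.of_isClosed_subset isCompact_Icc Kset_closed hsub

lemma Kset_convex : Convex ℝ Kset := by
  rintro x ⟨hx1, hx2⟩ y ⟨hy1, hy2⟩ a b ha hb hab
  have key : ∀ c : ℝ, ph c (a • x + b • y) = a * ph c x + b * ph c y := by
    intro c; unfold ph; simp [Pi.add_apply, Pi.smul_apply, smul_eq_mul]; ring
  constructor
  · rw [key]
    calc |a * ph be1 x + b * ph be1 y| ≤ |a * ph be1 x| + |b * ph be1 y| := abs_add_le _ _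
      _ = a * |ph be1 x| + b * |ph be1 y| := by
          rw [abs_mul, abs_mul, abs_of_nonneg ha, abs_of_nonneg hb]
      _ ≤ a * 11 + b * 11 := by
          have := abs_nonneg (ph be1 x); have := abs_nonneg (ph be1 y)
          apply add_le_add <;> apply mul_le_mul_of_nonneg_left <;> assumption
      _ = 11 := by rw [← add_mul, hab, one_mul]
  · rw [key]
    calc |a * ph be2 x + b * ph be2 y| ≤ |a * ph be2 x| + |b * ph be2 y| := abs_add_le _ _
      _ = a * |ph be2 x| + b * |ph be2 y| := by
          rw [abs_mul, abs_mul, abs_of_nonneg ha, abs_of_nonneg hb]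
      _ ≤ a * 2 + b * 2 := by
          apply add_le_add <;> apply mul_le_mul_of_nonneg_left <;> assumption
      _ = 2 := by rw [← add_mul, hab, one_mul]

lemma Kset_connected : IsConnected Kset := by
  refine ⟨⟨0, ?_, ?_⟩, Kset_convex.isPreconnected⟩ <;> simp [ph] <;> norm_num

lemma mem_Kset_iff (x : Fin 2 → ℝ) : x ∈ Kset ↔ |ph be1 x| ≤ 11 ∧ |ph be2 x| ≤ 2 :=
  Iff.rfl

lemma Kset_ov1 : ov Kset u1 := by
  refine ⟨![1/2, 0], ?_, ?_⟩
  · rw [mem_Kset_iff, ph_jvec, ph_jvec]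
    constructor <;> (rw [abs_le]; constructor <;> norm_num)
  · have he : ![1/2, 0] - u1 = ![-(1/2 : ℝ), 0] := by
      funext i; fin_cases i <;> simp [u1] <;> norm_num
    rw [he, mem_Kset_iff, ph_jvec, ph_jvec]
    constructor <;> (rw [abs_le]; constructor <;> norm_num)

lemma Kset_ov2 : ov Kset u2 := by
  have hlb := s2_lb; have hub := s2_ub
  refine ⟨![3, 1/2], ?_, ?_⟩
  · rw [mem_Kset_iff]
    constructor
    · show |3 + be1 * (1/2)| ≤ 11
      unfold be1; rw [abs_le]; constructor <;> linarith
    · show |3 + be2 * (1/2)| ≤ 2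
      unfold be2; rw [abs_le]; constructor <;> linarith
  · have he : ![3, 1/2] - u2 = ![-(3 : ℝ), -(1/2 : ℝ)] := by
      funext i; fin_cases i <;> simp [u2] <;> norm_num
    rw [he, mem_Kset_iff]
    constructor
    · show |(-3) + be1 * (-(1/2))| ≤ 11
      unfold be1; rw [abs_le]; constructor <;> linarith
    · show |(-3) + be2 * (-(1/2))| ≤ 2
      unfold be2; rw [abs_le]; constructor <;> linarith

lemma ph_dmap (b : ℝ) (hb : b * b + 6 * b + 7 = 0) (r : ℝ) (x : Fin 2 → ℝ) :
    ph b (dmap r x) = (ph b x + r) / b := ph_step b hb x r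

lemma Fop_Kset_sub : Fop Kset ⊆ Kset := by
  intro y hy
  rw [mem_Fop] at hy
  obtain ⟨j, x, hx, rfl⟩ := hy
  have hj0 : (0:ℝ) ≤ ((j:ℕ):ℝ) := by positivity
  have hj6 : ((j:ℕ):ℝ) ≤ 6 := by exact_mod_cast (by omega : (j:ℕ) ≤ 6)
  obtain ⟨h1, h2⟩ := hx
  have hlb := s2_lb; have hub := s2_ub
  rw [mem_Kset_iff]
  constructor
  · rw [ph_dmap be1 be1_quad, abs_div, abs_be1]
    rw [div_le_iff₀ (by linarith : (0:ℝ) < 3 - s2)]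
    have : |ph be1 x + ((j:ℕ):ℝ)| ≤ 17 := by
      rw [abs_le] at h1 ⊢; constructor <;> linarith
    nlinarith
  · rw [ph_dmap be2 be2_quad, abs_div, abs_be2]
    rw [div_le_iff₀ (by linarith : (0:ℝ) < 3 + s2)]
    have : |ph be2 x + ((j:ℕ):ℝ)| ≤ 8 := by
      rw [abs_le] at h2 ⊢; constructor <;> linarith
    nlinarith

lemma dmap_apply (r : ℝ) (x : Fin 2 → ℝ) :
    dmap r x = ![(-6/7) * (x 0 + r) + x 1, (-1/7) * (x 0 + r)] := by
  unfold dmap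
  rw [Nmat_mulVec]
  funext i
  fin_cases i <;> simp <;> ring

lemma id1 (y : Fin 2 → ℝ) : dmap 0 y - u1 = dmap 6 (y - u2) := by
  funext i
  fin_cases i <;>
    simp [dmap_apply, u1, u2, Matrix.vecHead, Matrix.vecTail, Function.comp] <;> ring

lemma id2 (y : Fin 2 → ℝ) : dmap 0 (y - u1) - u2 = dmap 6 y := by
  funext i
  fin_cases i <;>
    simp [dmap_apply, u1, u2, Matrix.vecHead, Matrix.vecTail, Function.comp] <;> ring

lemma id3 (r : ℝ) (y : Fin 2 → ℝ) : dmap (r + 1) (y - u1) = dmap r y := by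
  unfold dmap
  congr 1
  funext i
  fin_cases i <;> simp [u1, Matrix.vecHead, Matrix.vecTail] <;> ring

lemma cast_fin7 (k : ℕ) (h : k < 7) : (((⟨k, h⟩ : Fin 7) : ℕ) : ℝ) = (k : ℝ) := rfl

lemma mem_Fop_of (K : Set (Fin 2 → ℝ)) (x : Fin 2 → ℝ) (hx : x ∈ K)
    (k : ℕ) (hk : k < 7) : dmap (k : ℝ) x ∈ Fop K := by
  rw [mem_Fop]
  exact ⟨⟨k, hk⟩, x, hx, by rw [cast_fin7]⟩

lemma ov_Fop_u1 {K : Set (Fin 2 → ℝ)} (h : ov K u2) : ov (Fop K) u1 := by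
  obtain ⟨y, hy, hy2⟩ := h
  refine ⟨dmap 0 y, ?_, ?_⟩
  · have := mem_Fop_of K y hy 0 (by norm_num)
    simpa using this
  · rw [id1]
    have := mem_Fop_of K (y - u2) hy2 6 (by norm_num)
    simpa using this

lemma ov_Fop_u2 {K : Set (Fin 2 → ℝ)} (h : ov K u1) : ov (Fop K) u2 := by
  obtain ⟨y, hy, hy1⟩ := h
  refine ⟨dmap 0 (y - u1), ?_, ?_⟩
  · have := mem_Fop_of K (y - u1) hy1 0 (by norm_num)
    simpa using this
  · rw [id2]
    have := mem_Fop_of K y hy 6 (by norm_num)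
    simpa using this

lemma Fop_eq_union (K : Set (Fin 2 → ℝ)) :
    Fop K = dmap 0 '' K ∪ dmap 1 '' K ∪ dmap 2 '' K ∪ dmap 3 '' K ∪ dmap 4 '' K
      ∪ dmap 5 '' K ∪ dmap 6 '' K := by
  apply Set.Subset.antisymm
  · intro y hy
    rw [mem_Fop] at hy
    obtain ⟨j, x, hx, rfl⟩ := hy
    fin_cases j <;> simp only [cast_fin7, Set.mem_union] <;> norm_num <;>
      first
      | exact Or.inl (Or.inl (Or.inl (Or.inl (Or.inl (Or.inl ⟨x, hx, rfl⟩)))))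
      | exact Or.inl (Or.inl (Or.inl (Or.inl (Or.inl (Or.inr ⟨x, hx, rfl⟩)))))
      | exact Or.inl (Or.inl (Or.inl (Or.inl (Or.inr ⟨x, hx, rfl⟩))))
      | exact Or.inl (Or.inl (Or.inl (Or.inr ⟨x, hx, rfl⟩)))
      | exact Or.inl (Or.inl (Or.inr ⟨x, hx, rfl⟩))
      | exact Or.inl (Or.inr ⟨x, hx, rfl⟩)
      | exact Or.inr ⟨x, hx, rfl⟩
  · intro y hy
    simp only [Set.mem_union] at hy
    rcases hy with ((((((⟨x, hx, rfl⟩ | ⟨x, hx, rfl⟩) | ⟨x, hx, rfl⟩) | ⟨x, hx, rfl⟩) |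
      ⟨x, hx, rfl⟩) | ⟨x, hx, rfl⟩) | ⟨x, hx, rfl⟩)
    · exact (by simpa using mem_Fop_of K x hx 0 (by norm_num))
    · exact (by simpa using mem_Fop_of K x hx 1 (by norm_num))
    · exact (by simpa using mem_Fop_of K x hx 2 (by norm_num))
    · exact (by simpa using mem_Fop_of K x hx 3 (by norm_num))
    · exact (by simpa using mem_Fop_of K x hx 4 (by norm_num))
    · exact (by simpa using mem_Fop_of K x hx 5 (by norm_num))
    · exact (by simpa using mem_Fop_of K x hx 6 (by norm_num))

lemma Fop_connected {K : Set (Fin 2 → ℝ)} (hK : IsConnected K) (h1 : ov K u1) :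
    IsConnected (Fop K) := by
  obtain ⟨y, hy, hy1⟩ := h1
  have hCc : ∀ r : ℝ, IsConnected (dmap r '' K) := fun r =>
    hK.image _ (cont_dmap r).continuousOn
  have hpt : ∀ r : ℝ, dmap r y ∈ dmap r '' K ∩ dmap (r + 1) '' K := by
    intro r
    exact ⟨⟨y, hy, rfl⟩, ⟨y - u1, hy1, id3 r y⟩⟩
  have hne : ∀ r : ℝ, (dmap r '' K ∩ dmap (r + 1) '' K).Nonempty := fun r => ⟨_, hpt r⟩
  rw [Fop_eq_union]
  have h01 : IsConnected (dmap 0 '' K ∪ dmap 1 '' K) := by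
    apply IsConnected.union _ (hCc 0) (hCc 1)
    have h := hne 0
    rw [show (0:ℝ)+1 = 1 by norm_num] at h
    exact h
  have h02 : IsConnected (dmap 0 '' K ∪ dmap 1 '' K ∪ dmap 2 '' K) := by
    apply IsConnected.union _ h01 (hCc 2)
    obtain ⟨p, hp1, hp2⟩ := hne 1
    rw [show (1:ℝ)+1 = 2 by norm_num] at hp2
    exact ⟨p, Or.inr hp1, hp2⟩
  have h03 : IsConnected (dmap 0 '' K ∪ dmap 1 '' K ∪ dmap 2 '' K ∪ dmap 3 '' K) := by
    apply IsConnected.union _ h02 (hCc 3)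
    obtain ⟨p, hp1, hp2⟩ := hne 2
    rw [show (2:ℝ)+1 = 3 by norm_num] at hp2
    exact ⟨p, Or.inr hp1, hp2⟩
  have h04 : IsConnected (dmap 0 '' K ∪ dmap 1 '' K ∪ dmap 2 '' K ∪ dmap 3 '' K
      ∪ dmap 4 '' K) := by
    apply IsConnected.union _ h03 (hCc 4)
    obtain ⟨p, hp1, hp2⟩ := hne 3
    rw [show (3:ℝ)+1 = 4 by norm_num] at hp2
    exact ⟨p, Or.inr hp1, hp2⟩
  have h05 : IsConnected (dmap 0 '' K ∪ dmap 1 '' K ∪ dmap 2 '' K ∪ dmap 3 '' K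
      ∪ dmap 4 '' K ∪ dmap 5 '' K) := by
    apply IsConnected.union _ h04 (hCc 5)
    obtain ⟨p, hp1, hp2⟩ := hne 4
    rw [show (4:ℝ)+1 = 5 by norm_num] at hp2
    exact ⟨p, Or.inr hp1, hp2⟩
  apply IsConnected.union _ h05 (hCc 6)
  obtain ⟨p, hp1, hp2⟩ := hne 5
  rw [show (5:ℝ)+1 = 6 by norm_num] at hp2
  exact ⟨p, Or.inr hp1, hp2⟩

lemma dmap_sub (r : ℝ) (x t : Fin 2 → ℝ) :
    dmap r x - dmap r t = Nmat.mulVec (x - t) := by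
  unfold dmap
  rw [← Matrix.mulVec_sub]
  congr 1
  abel

section Final
variable {T : Set (Fin 2 → ℝ)}

lemma T_sub_Kset (hself : SelfAffine A67 D67 T) : T ⊆ Kset := by
  intro x hx
  have h1 := T_bound1 hself x hx
  have h2 := T_bound2 hself x hx
  have hlb := s2_lb; have hub := s2_ub
  have hc1 : |c1| ≤ 2 := by
    rw [c1_eq, abs_le]; constructor <;> [nlinarith; nlinarith]
  have hc2 : |c2| ≤ 1 := by
    rw [c2_eq, abs_le]; constructor <;> [nlinarith; nlinarith]
  have hd1 : 3 / (2 - s2) ≤ 6 := by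
    rw [div_le_iff₀ (by linarith : (0:ℝ) < 2 - s2)]; linarith
  have hd2 : 3 / (2 + s2) ≤ 1 := by
    rw [div_le_iff₀ (by linarith : (0:ℝ) < 2 + s2)]; linarith
  constructor
  · calc |ph be1 x| = |ph be1 x - c1 + c1| := by ring_nf
      _ ≤ |ph be1 x - c1| + |c1| := abs_add_le _ _
      _ ≤ 11 := by linarith
  · calc |ph be2 x| = |ph be2 x - c2 + c2| := by ring_nf
      _ ≤ |ph be2 x - c2| + |c2| := abs_add_le _ _
      _ ≤ 2 := by linarith

def KK : ℕ → Set (Fin 2 → ℝ) := fun n => Fop^[n] Kset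

lemma KK_succ (n : ℕ) : KK (n + 1) = Fop (KK n) := Function.iterate_succ_apply' Fop n Kset

lemma KK_inv (n : ℕ) : IsCompact (KK n) ∧ IsConnected (KK n) ∧ ov (KK n) u1 ∧ ov (KK n) u2 := by
  induction n with
  | zero => exact ⟨Kset_compact, Kset_connected, Kset_ov1, Kset_ov2⟩
  | succ n ih =>
    obtain ⟨hc, hconn, h1, h2⟩ := ih
    rw [KK_succ]
    exact ⟨Fop_compact hc, Fop_connected hconn h1, ov_Fop_u1 h2, ov_Fop_u2 h1⟩

lemma KK_dec (n : ℕ) : KK (n + 1) ⊆ KK n := by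
  induction n with
  | zero =>
    rw [KK_succ]
    exact Fop_Kset_sub
  | succ n ih =>
    calc KK (n + 2) = Fop (KK (n + 1)) := KK_succ (n + 1)
      _ ⊆ Fop (KK n) := Fop_mono ih
      _ = KK (n + 1) := (KK_succ n).symm

lemma T_sub_KK (hself : SelfAffine A67 D67 T) (n : ℕ) : T ⊆ KK n := by
  induction n with
  | zero => exact T_sub_Kset hself
  | succ n ih =>
    rw [KK_succ]
    exact (T_sub_FopT hself).trans (Fop_mono ih)

lemma KK_approx (hself : SelfAffine A67 D67 T) (n : ℕ) :
    ∀ y ∈ KK n, ∃ t ∈ T, |ph be1 (y - t)| ≤ 22 / (3 - s2) ^ n ∧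
      |ph be2 (y - t)| ≤ 22 / (3 + s2) ^ n := by
  induction n with
  | zero =>
    intro y hy
    refine ⟨zpt, zpt_mem hself, ?_, ?_⟩ <;> rw [ph_sub, pow_zero]
    · have hc1 : |c1| ≤ 2 := by
        have hlb := s2_lb; have hub := s2_ub
        rw [c1_eq, abs_le]; constructor <;> nlinarith
      have := hy.1
      calc |ph be1 y - ph be1 zpt| ≤ |ph be1 y| + |ph be1 zpt| := abs_sub _ _
        _ ≤ 22 / 1 := by unfold c1 at hc1; norm_num; linarith
    · have hc2 : |c2| ≤ 1 := by
        have hlb := s2_lb; have hub := s2_ub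
        rw [c2_eq, abs_le]; constructor <;> nlinarith
      have := hy.2
      calc |ph be2 y - ph be2 zpt| ≤ |ph be2 y| + |ph be2 zpt| := abs_sub _ _
        _ ≤ 22 / 1 := by unfold c2 at hc2; norm_num; linarith
  | succ n ih =>
    intro y hy
    rw [KK_succ, mem_Fop] at hy
    obtain ⟨j, x, hx, rfl⟩ := hy
    obtain ⟨t, ht, h1, h2⟩ := ih x hx
    refine ⟨dmap ((j:ℕ):ℝ) t, ?_, ?_, ?_⟩
    · exact FopT_sub_T hself (mem_Fop_of T t ht (j:ℕ) (by omega))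
    · rw [dmap_sub, ph_N be1 be1_quad, abs_div, abs_be1, pow_succ, ← div_div]
      exact div_le_div_of_nonneg_right h1 q1_pos.le
    · rw [dmap_sub, ph_N be2 be2_quad, abs_div, abs_be2, pow_succ, ← div_div]
      exact div_le_div_of_nonneg_right h2 q2_pos.le

lemma iInter_KK_sub_T (hself : SelfAffine A67 D67 T) : (⋂ n, KK n) ⊆ T := by
  obtain ⟨-, hcomp, -⟩ := id hself
  intro y hy
  rw [← hcomp.isClosed.closure_eq]
  rw [Metric.mem_closure_iff]
  intro ε hε
  obtain ⟨n, hn⟩ := pow_unbounded_of_one_lt (132 / ε) q1_gt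
  obtain ⟨t, ht, h1, h2⟩ := KK_approx hself n y (Set.mem_iInter.mp hy n)
  refine ⟨t, ht, ?_⟩
  rw [dist_pi_lt_iff hε]
  intro i
  rw [Real.dist_eq]
  have hq1n : (0:ℝ) < (3 - s2) ^ n := pow_pos q1_pos n
  have hq2n : (0:ℝ) < (3 + s2) ^ n := pow_pos q2_pos n
  have h22 : 22 / (3 + s2) ^ n ≤ 22 / (3 - s2) ^ n := by
    apply div_le_div_of_nonneg_left (by norm_num) hq1n
    exact pow_le_pow_left₀ q1_pos.le q1_le_q2 n
  have hcb := coord_bound (y - t)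
  have hiB : |(y - t) i| ≤ 132 / (3 - s2) ^ n := by
    have hsum : |ph be1 (y - t)| + |ph be2 (y - t)| ≤ 44 / (3 - s2) ^ n := by
      have : (22:ℝ) / (3 - s2) ^ n + 22 / (3 - s2) ^ n = 44 / (3 - s2) ^ n := by ring
      linarith
    fin_cases i
    · calc |(y - t) 0| ≤ 3 * (|ph be1 (y - t)| + |ph be2 (y - t)|) := hcb.1
        _ ≤ 3 * (44 / (3 - s2) ^ n) := by linarith
        _ = 132 / (3 - s2) ^ n := by ring
    · calc |(y - t) 1| ≤ |ph be1 (y - t)| + |ph be2 (y - t)| := hcb.2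
        _ ≤ 44 / (3 - s2) ^ n := hsum
        _ ≤ 132 / (3 - s2) ^ n := by
            rw [div_le_div_iff₀ hq1n hq1n]; nlinarith
  have hlt : 132 / (3 - s2) ^ n < ε := by
    rw [div_lt_iff₀ hq1n]
    rw [div_lt_iff₀ hε] at hn
    linarith
  have : |y i - t i| = |(y - t) i| := by rw [Pi.sub_apply]
  rw [this]
  exact lt_of_le_of_lt hiB hlt

lemma T_connected (hself : SelfAffine A67 D67 T) : IsConnected T := by
  have hTeq : T = ⋂ n, KK n :=
    Set.Subset.antisymm (Set.subset_iInter (T_sub_KK hself)) (iInter_KK_sub_T hself)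
  rw [hTeq]
  exact isConnected_iInter_of_seq KK KK_dec (fun n => (KK_inv n).1) (fun n => (KK_inv n).2.1)
end Final


theorem statement17 (T : Set (Fin 2 → ℝ)) (hself : SelfAffine A67 D67 T) :
    IsConnected T ∧
      (∑' k : ℕ, ((rmat A67)⁻¹ ^ (k + 1)).mulVec ![(3 : ℝ), 0]) =
        ![-(3 : ℝ) / 2, -(3 : ℝ) / 14] ∧
      ![-(3 : ℝ) / 2, -(3 : ℝ) / 14] ∈ T ∧
      SepUnion (T \ {![-(3 : ℝ) / 2, -(3 : ℝ) / 14]}) := by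
  have hz : (![-(3 : ℝ) / 2, -(3 : ℝ) / 14]) = zpt := rfl
  refine ⟨T_connected hself, ?_, ?_, ?_⟩
  · rw [hz]; exact tsum_eq_zpt
  · rw [hz]; exact zpt_mem hself
  · rw [hz]
    obtain ⟨U, V, h1, h2, h3, h4, h5⟩ := sep_union hself
    exact ⟨U, V, h1, h2, h3, h4, h5⟩
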